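/- Fix a nonnegative integer r and let f : ℝ → ℝ be defined (for t < log 2) by f(t) = (e^t − 1)^r · e^{−(e^t−1)} / (r!·(2 − e^t)). Then for every n ≥ 0, the n-th iterated derivative of f at t = 0 equals the r-partial deranged Bell number w̃_{n,r}; equivalently, ∑_{n≥0} w̃_{n,r} t^n/n! = (e^t−1)^r e^{−(e^t−1)}/(r!(2−e^t)). -/

import Mathlib

/-- Stirling numbers of the second kind. -/
def stirling2 : ℕ → ℕ → ℕ
  | 0, 0 => 1
  | 0, _ + 1 => 0
  | _ + 1, 0 => 0
  | n + 1, k + 1 => (k + 1) * stirling2 n (k + 1) + stirling2 n k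

/-- Derangement numbers `d_n = n! ∑_{i=0}^n (-1)^i / i!`. -/
noncomputable def derang (n : ℕ) : ℝ :=
  (n.factorial : ℝ) * ∑ i ∈ Finset.range (n + 1), (-1 : ℝ) ^ i / (i.factorial : ℝ)

/-- Partial derangement numbers `d_{n,r}`. -/
noncomputable def pderang (n r : ℕ) : ℝ :=
  if r ≤ n then (n.choose r : ℝ) * derang (n - r) else 0

/-- Partial deranged Bell numbers `w̃_{n,r}`. -/
noncomputable def pdb (n r : ℕ) : ℝ :=
  ∑ k ∈ Finset.range (n + 1), (stirling2 n k : ℝ) * pderang k r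

open Real Filter Set Topology
open scoped ContDiff

example (n : ℕ) : ((n : ℕ∞) : WithTop ℕ∞) ≤ ∞ := by exact_mod_cast le_top

lemma iD_within_eq {f : ℝ → ℝ} {s : Set ℝ} (hs : IsOpen s) {x : ℝ} (hx : x ∈ s) (n : ℕ) :
    iteratedDerivWithin n f s x = iteratedDeriv n f x := by
  rw [iteratedDerivWithin_eq_iteratedFDerivWithin, iteratedDeriv_eq_iteratedFDeriv,
    iteratedFDerivWithin_of_isOpen n hs hx]

lemma iD_add {f g : ℝ → ℝ} {s : Set ℝ} (hs : IsOpen s) {x : ℝ} (hx : x ∈ s)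
    (hf : ContDiffOn ℝ ∞ f s) (hg : ContDiffOn ℝ ∞ g s) (n : ℕ) :
    iteratedDeriv n (fun y => f y + g y) x = iteratedDeriv n f x + iteratedDeriv n g x := by
  rw [← iD_within_eq hs hx, ← iD_within_eq hs hx, ← iD_within_eq hs hx]
  exact iteratedDerivWithin_add hx hs.uniqueDiffOn ((hf.contDiffWithinAt hx).of_le (by exact_mod_cast le_top))
    ((hg.contDiffWithinAt hx).of_le (by exact_mod_cast le_top))

lemma iD_sub {f g : ℝ → ℝ} {s : Set ℝ} (hs : IsOpen s) {x : ℝ} (hx : x ∈ s)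
    (hf : ContDiffOn ℝ ∞ f s) (hg : ContDiffOn ℝ ∞ g s) (n : ℕ) :
    iteratedDeriv n (fun y => f y - g y) x = iteratedDeriv n f x - iteratedDeriv n g x := by
  rw [← iD_within_eq hs hx, ← iD_within_eq hs hx, ← iD_within_eq hs hx]
  exact iteratedDerivWithin_sub hx hs.uniqueDiffOn ((hf.contDiffWithinAt hx).of_le (by exact_mod_cast le_top))
    ((hg.contDiffWithinAt hx).of_le (by exact_mod_cast le_top))

lemma iD_cmul {f : ℝ → ℝ} {s : Set ℝ} (hs : IsOpen s) {x : ℝ} (hx : x ∈ s) (c : ℝ)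
    (hf : ContDiffOn ℝ ∞ f s) (n : ℕ) :
    iteratedDeriv n (fun y => c * f y) x = c * iteratedDeriv n f x := by
  rw [← iD_within_eq hs hx, ← iD_within_eq hs hx]
  exact iteratedDerivWithin_const_mul hx hs.uniqueDiffOn c ((hf.contDiffWithinAt hx).of_le (by exact_mod_cast le_top))
lemma iD_linear_mul {s : Set ℝ} (hs : IsOpen s) (c : ℝ) :
    ∀ (n : ℕ) (g : ℝ → ℝ), ContDiffOn ℝ ∞ g s → ∀ x ∈ s,
      iteratedDeriv n (fun y => (c + y) * g y) x
        = (c + x) * iteratedDeriv n g x + n * iteratedDeriv (n - 1) g x := by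
  intro n
  induction n with
  | zero => intro g hg x hx; simp
  | succ n ih =>
    intro g hg x hx
    have hg' : ContDiffOn ℝ ∞ (deriv g) s := hg.deriv_of_isOpen hs (by simp)
    have hder : ∀ y ∈ s, deriv (fun z => (c + z) * g z) y = g y + (c + y) * deriv g y := by
      intro y hy
      have hgy : DifferentiableAt ℝ g y :=
        (hg.contDiffAt (hs.mem_nhds hy)).differentiableAt (by simp)
      have h : HasDerivAt (fun z => (c + z) * g z) _ y :=
        ((hasDerivAt_id y).const_add c).mul hgy.hasDerivAt
      simpa [mul_comm] using h.deriv
    have hcong : deriv (fun z => (c + z) * g z) =ᶠ[𝓝 x]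
        fun y => g y + (c + y) * deriv g y := eventually_of_mem (hs.mem_nhds hx) hder
    have h2 : ContDiffOn ℝ ∞ (fun y => (c + y) * deriv g y) s := by
      exact (contDiffOn_const.add contDiffOn_id).mul hg'
    rw [iteratedDeriv_succ', hcong.iteratedDeriv_eq n,
      iD_add (f := g) (g := fun y => (c + y) * deriv g y) hs hx hg h2, ih (deriv g) hg' x hx]
    rw [← iteratedDeriv_succ']
    have hnm : (n : ℝ) * iteratedDeriv (n - 1) (deriv g) x = n * iteratedDeriv n g x := by
      cases n with
      | zero => simp
      | succ m => rw [Nat.succ_sub_one, ← iteratedDeriv_succ']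
    rw [hnm, Nat.add_sub_cancel]
    push_cast
    ring

noncomputable def phiF (a b : ℕ) : ℝ → ℝ := fun x => x ^ a * Real.exp (-x) * ((1 - x)⁻¹) ^ b

lemma sOne_open : IsOpen {x : ℝ | x ≠ 1} := isOpen_ne
lemma zero_mem_sOne : (0 : ℝ) ∈ {x : ℝ | x ≠ 1} := by norm_num

lemma phi_smooth (a b : ℕ) : ContDiffOn ℝ ∞ (phiF a b) {x : ℝ | x ≠ 1} := by
  have h1 : ContDiffOn ℝ ∞ (fun x : ℝ => x ^ a) {x : ℝ | x ≠ 1} :=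
    (contDiff_id.pow a).contDiffOn
  have h2 : ContDiffOn ℝ ∞ (fun x : ℝ => Real.exp (-x)) {x : ℝ | x ≠ 1} :=
    (Real.contDiff_exp.comp contDiff_neg).contDiffOn
  have h3 : ContDiffOn ℝ ∞ (fun x : ℝ => ((1 - x)⁻¹) ^ b) {x : ℝ | x ≠ 1} := by
    refine ContDiffOn.pow ?_ b
    exact (contDiffOn_const.sub contDiffOn_id).inv fun x hx => sub_ne_zero.mpr (Ne.symm hx)
  exact (h1.mul h2).mul h3

lemma hasDerivAt_phi (a b : ℕ) {x : ℝ} (hx : x ≠ 1) :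
    HasDerivAt (phiF a b)
      ((a * x ^ (a - 1)) * (Real.exp (-x) * ((1 - x)⁻¹) ^ b)
        + x ^ a * ((-Real.exp (-x)) * ((1 - x)⁻¹) ^ b
          + Real.exp (-x) * (b * ((1 - x)⁻¹) ^ (b - 1) * (1 / (1 - x) ^ 2)))) x := by
  have hne : (1 : ℝ) - x ≠ 0 := sub_ne_zero.mpr (Ne.symm hx)
  have h1 : HasDerivAt (fun y : ℝ => y ^ a) (a * x ^ (a - 1)) x := hasDerivAt_pow a x
  have h2 : HasDerivAt (fun y : ℝ => Real.exp (-y)) (-Real.exp (-x)) x := by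
    have := ((hasDerivAt_id x).neg).exp
    simpa using this
  have h3i : HasDerivAt (fun y : ℝ => (1 - y)⁻¹) (1 / (1 - x) ^ 2) x := by
    have h : HasDerivAt (fun y : ℝ => (1 - y)⁻¹) _ x := ((hasDerivAt_id x).const_sub 1).inv hne
    simpa using h
  have h3 : HasDerivAt (fun y : ℝ => ((1 - y)⁻¹) ^ b)
      (b * ((1 - x)⁻¹) ^ (b - 1) * (1 / (1 - x) ^ 2)) x := h3i.pow b
  have h12 : HasDerivAt (fun y : ℝ => y ^ a * Real.exp (-y))
      ((a * x ^ (a - 1)) * Real.exp (-x) + x ^ a * (-Real.exp (-x))) x := h1.mul h2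
  have : HasDerivAt (fun y : ℝ => y ^ a * Real.exp (-y) * ((1 - y)⁻¹) ^ b) _ x := h12.mul h3
  unfold phiF
  convert this using 1
  ring

lemma phi_deriv_id (a b : ℕ) : ∀ x ∈ {x : ℝ | x ≠ 1},
    (1 + x) * deriv (phiF a b) x =
      a * phiF (a - 1) b x + ((a : ℝ) - 1 - b) * phiF a b x
        - phiF (a + 1) b x + 2 * b * phiF a (b + 1) x := by
  intro x hx
  have hne : (1 : ℝ) - x ≠ 0 := sub_ne_zero.mpr (Ne.symm hx)
  rw [(hasDerivAt_phi a b hx).deriv]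
  unfold phiF
  cases a with
  | zero =>
    cases b with
    | zero => simp; ring
    | succ b =>
      simp only [pow_zero, Nat.cast_zero, Nat.cast_succ, Nat.succ_sub_one, pow_succ]
      field_simp
      ring
  | succ a =>
    cases b with
    | zero =>
      simp only [Nat.succ_sub_one, Nat.cast_succ, Nat.cast_zero, pow_zero, pow_succ]
      field_simp
      ring
    | succ b =>
      simp only [Nat.succ_sub_one, Nat.cast_succ, pow_succ]
      field_simp
      ring

noncomputable def Dc (k a b : ℕ) : ℝ := iteratedDeriv k (phiF a b) 0

lemma phi_deriv_smooth (a b : ℕ) : ContDiffOn ℝ ∞ (deriv (phiF a b)) {x : ℝ | x ≠ 1} :=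
  (phi_smooth a b).deriv_of_isOpen sOne_open (by simp)

lemma Dc_rec (k a b : ℕ) :
    Dc (k + 1) a b + k * Dc k a b =
      a * Dc k (a - 1) b + ((a : ℝ) - 1 - b) * Dc k a b - Dc k (a + 1) b
        + 2 * b * Dc k a (b + 1) := by
  have hL := iD_linear_mul sOne_open 1 k (deriv (phiF a b)) (phi_deriv_smooth a b) 0 zero_mem_sOne
  have hcong : (fun y => (1 + y) * deriv (phiF a b) y) =ᶠ[𝓝 (0:ℝ)]
      (fun y => (a : ℝ) * phiF (a - 1) b y + ((a : ℝ) - 1 - (b : ℝ)) * phiF a b y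
        - phiF (a + 1) b y + 2 * b * phiF a (b + 1) y) :=
    eventually_of_mem (sOne_open.mem_nhds zero_mem_sOne) (phi_deriv_id a b)
  have hsplit : iteratedDeriv k (fun y => (a : ℝ) * phiF (a - 1) b y
        + ((a : ℝ) - 1 - (b : ℝ)) * phiF a b y - phiF (a + 1) b y
        + 2 * b * phiF a (b + 1) y) 0
      = (a : ℝ) * Dc k (a - 1) b + ((a : ℝ) - 1 - b) * Dc k a b - Dc k (a + 1) b
        + 2 * b * Dc k a (b + 1) := by
    have s1 : ContDiffOn ℝ ∞ (fun y => (a : ℝ) * phiF (a - 1) b y) {x : ℝ | x ≠ 1} :=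
      contDiffOn_const.mul (phi_smooth _ _)
    have s2 : ContDiffOn ℝ ∞ (fun y => ((a : ℝ) - 1 - (b : ℝ)) * phiF a b y) {x : ℝ | x ≠ 1} :=
      contDiffOn_const.mul (phi_smooth _ _)
    have s12 : ContDiffOn ℝ ∞ (fun y => (a : ℝ) * phiF (a - 1) b y
        + ((a : ℝ) - 1 - (b : ℝ)) * phiF a b y) {x : ℝ | x ≠ 1} := s1.add s2
    have s3 : ContDiffOn ℝ ∞ (fun y => phiF (a + 1) b y) {x : ℝ | x ≠ 1} := phi_smooth _ _
    have s123 : ContDiffOn ℝ ∞ (fun y => (a : ℝ) * phiF (a - 1) b y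
        + ((a : ℝ) - 1 - (b : ℝ)) * phiF a b y - phiF (a + 1) b y) {x : ℝ | x ≠ 1} := s12.sub s3
    have s4 : ContDiffOn ℝ ∞ (fun y => 2 * (b : ℝ) * phiF a (b + 1) y) {x : ℝ | x ≠ 1} :=
      contDiffOn_const.mul (phi_smooth _ _)
    rw [iD_add sOne_open zero_mem_sOne s123 s4, iD_sub sOne_open zero_mem_sOne s12 s3,
      iD_add sOne_open zero_mem_sOne s1 s2, iD_cmul sOne_open zero_mem_sOne _ (phi_smooth _ _),
      iD_cmul sOne_open zero_mem_sOne _ (phi_smooth _ _),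
      iD_cmul sOne_open zero_mem_sOne _ (phi_smooth _ _)]
    rfl
  rw [hcong.iteratedDeriv_eq k, hsplit] at hL
  have hk1 : iteratedDeriv k (deriv (phiF a b)) 0 = Dc (k + 1) a b := by
    unfold Dc; rw [iteratedDeriv_succ']
  have hk2 : (k : ℝ) * iteratedDeriv (k - 1) (deriv (phiF a b)) 0 = k * Dc k a b := by
    cases k with
    | zero => simp
    | succ m =>
      unfold Dc
      rw [Nat.succ_sub_one, ← iteratedDeriv_succ']
  rw [hk1, hk2] at hL; linarith [hL]



lemma iD_expneg (n : ℕ) (x : ℝ) :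
    iteratedDeriv n (fun y : ℝ => Real.exp (-y)) x = (-1) ^ n * Real.exp (-x) := by
  have h := iteratedDeriv_exp_const_mul n (-1)
  have he : (fun y : ℝ => Real.exp (-y)) = fun s : ℝ => Real.exp (-1 * s) := by
    funext s; norm_num
  rw [he, h]
  norm_num

lemma derang_zero : derang 0 = 1 := by simp [derang]

lemma derang_rec (k : ℕ) : derang (k + 1) = (k + 1) * derang k + (-1 : ℝ) ^ (k + 1) := by
  unfold derang
  rw [Finset.sum_range_succ (n := k + 1)]
  rw [mul_add]
  congr 1
  · push_cast [Nat.factorial_succ]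
    ring
  · rw [mul_div_cancel₀]
    exact_mod_cast Nat.factorial_ne_zero (k + 1)

lemma expneg_eq_phi : ∀ x ∈ {x : ℝ | x ≠ 1},
    Real.exp (-x) = phiF 0 1 x - (0 + x) * phiF 0 1 x := by
  intro x hx
  have hne : (1 : ℝ) - x ≠ 0 := sub_ne_zero.mpr (Ne.symm hx)
  unfold phiF
  field_simp
  ring

lemma Dc_zero_one (k : ℕ) : Dc k 0 1 = derang k := by
  induction k with
  | zero =>
    unfold Dc
    rw [iteratedDeriv_zero, derang_zero]
    unfold phiF
    norm_num
  | succ k ih =>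
    have hcong : (fun y : ℝ => Real.exp (-y)) =ᶠ[𝓝 (0:ℝ)]
        (fun y => phiF 0 1 y - (0 + y) * phiF 0 1 y) :=
      eventually_of_mem (sOne_open.mem_nhds zero_mem_sOne) expneg_eq_phi
    have h1 := hcong.iteratedDeriv_eq (k + 1)
    rw [iD_expneg] at h1
    have s2 : ContDiffOn ℝ ∞ (fun y : ℝ => (0 + y) * phiF 0 1 y) {x : ℝ | x ≠ 1} :=
      (contDiffOn_const.add contDiffOn_id).mul (phi_smooth 0 1)
    rw [iD_sub sOne_open zero_mem_sOne (phi_smooth 0 1) s2,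
      iD_linear_mul sOne_open 0 (k + 1) (phiF 0 1) (phi_smooth 0 1) 0 zero_mem_sOne] at h1
    have : ((-1 : ℝ)) ^ (k+1) * Real.exp (-0)
        = Dc (k + 1) 0 1 - (0 + (k + 1) * Dc k 0 1) := by
      simpa [Dc] using h1
    rw [neg_zero, Real.exp_zero, mul_one] at this
    rw [derang_rec, ← ih]
    linarith [this]

lemma phi_succ (r : ℕ) : phiF (r + 1) 1 = fun y => (0 + y) * phiF r 1 y := by
  funext y
  unfold phiF
  ring

lemma Dc_succ_a (k r : ℕ) : Dc k (r + 1) 1 = k * Dc (k - 1) r 1 := by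
  unfold Dc
  rw [phi_succ r, iD_linear_mul sOne_open 0 k (phiF r 1) (phi_smooth r 1) 0 zero_mem_sOne]
  simp

lemma Dc_eq_pderang (r : ℕ) : ∀ k, Dc k r 1 = (r.factorial : ℝ) * pderang k r := by
  induction r with
  | zero =>
    intro k
    rw [Dc_zero_one]
    simp [pderang]
  | succ r ih =>
    intro k
    cases k with
    | zero =>
      rw [Dc_succ_a]
      simp [pderang]
    | succ k =>
      rw [Dc_succ_a, Nat.succ_sub_one, ih k]
      unfold pderang
      by_cases hrk : r ≤ k
      · rw [if_pos hrk, if_pos (Nat.succ_le_succ hrk)]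
        have hch : (k + 1) * Nat.choose k r = Nat.choose (k + 1) (r + 1) * (r + 1) :=
          Nat.add_one_mul_choose_eq k r
        have : Nat.succ k - Nat.succ r = k - r := by omega
        rw [this]
        have := congrArg (fun m : ℕ => (m : ℝ)) hch
        push_cast at this ⊢
        push_cast [Nat.factorial_succ]
        linear_combination ((r.factorial : ℝ) * derang (k - r)) * this
      · rw [if_neg hrk, if_neg (by omega)]
        ring


lemma stirling2_eq_zero {n k : ℕ} (h : n < k) : stirling2 n k = 0 := by
  induction n generalizing k with
  | zero => obtain ⟨k, rfl⟩ := Nat.exists_eq_succ_of_ne_zero (by omega : k ≠ 0); rfl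
  | succ n ih =>
    obtain ⟨k, rfl⟩ := Nat.exists_eq_succ_of_ne_zero (by omega : k ≠ 0)
    show (k + 1) * stirling2 n (k + 1) + stirling2 n k = 0
    rw [ih (by omega), ih (by omega)]
    simp

noncomputable def Ffun (a b : ℕ) : ℝ → ℝ := fun t => phiF a b (Real.exp t - 1)

lemma sTwo_open : IsOpen {t : ℝ | Real.exp t < 2} :=
  isOpen_lt Real.continuous_exp continuous_const

lemma zero_mem_sTwo : (0 : ℝ) ∈ {t : ℝ | Real.exp t < 2} := by
  simp only [Set.mem_setOf_eq, Real.exp_zero]; norm_num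

lemma F_smooth (a b : ℕ) : ContDiffOn ℝ ∞ (Ffun a b) {t : ℝ | Real.exp t < 2} := by
  refine (phi_smooth a b).comp ((Real.contDiff_exp.sub contDiff_const).contDiffOn) ?_
  intro t ht
  simp only [Set.mem_setOf_eq] at ht ⊢
  intro h
  linarith

lemma F_deriv (a b : ℕ) : ∀ t ∈ {t : ℝ | Real.exp t < 2},
    deriv (Ffun a b) t = a * Ffun (a - 1) b t + ((a : ℝ) - 1 - b) * Ffun a b t
      - Ffun (a + 1) b t + 2 * b * Ffun a (b + 1) t := by
  intro t ht
  simp only [Set.mem_setOf_eq] at ht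
  have hne : (1 : ℝ) - (Real.exp t - 1) ≠ 0 := by
    intro h; rw [sub_eq_zero] at h; linarith
  have g1 : HasDerivAt (fun u : ℝ => (Real.exp u - 1) ^ a)
      (a * (Real.exp t - 1) ^ (a - 1) * Real.exp t) t :=
    ((Real.hasDerivAt_exp t).sub_const 1).pow a
  have g2 : HasDerivAt (fun u : ℝ => Real.exp (-(Real.exp u - 1)))
      (Real.exp (-(Real.exp t - 1)) * (-Real.exp t)) t :=
    (((Real.hasDerivAt_exp t).sub_const 1).neg).exp
  have g3i : HasDerivAt (fun u : ℝ => (1 - (Real.exp u - 1))⁻¹)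
      (-(-Real.exp t) / (1 - (Real.exp t - 1)) ^ 2) t :=
    (((Real.hasDerivAt_exp t).sub_const 1).const_sub 1).inv hne
  have g3 : HasDerivAt (fun u : ℝ => ((1 - (Real.exp u - 1))⁻¹) ^ b)
      (b * ((1 - (Real.exp t - 1))⁻¹) ^ (b - 1)
        * (-(-Real.exp t) / (1 - (Real.exp t - 1)) ^ 2)) t := g3i.pow b
  have g12 : HasDerivAt (fun u : ℝ => (Real.exp u - 1) ^ a * Real.exp (-(Real.exp u - 1))) _ t :=
    g1.mul g2
  have g : HasDerivAt (fun u : ℝ => (Real.exp u - 1) ^ a * Real.exp (-(Real.exp u - 1))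
      * ((1 - (Real.exp u - 1))⁻¹) ^ b) _ t := g12.mul g3
  have hF : Ffun a b = fun u => (Real.exp u - 1) ^ a * Real.exp (-(Real.exp u - 1))
      * ((1 - (Real.exp u - 1))⁻¹) ^ b := by
    funext u; unfold Ffun phiF; ring
  rw [hF]
  rw [g.deriv]
  unfold Ffun phiF
  cases a with
  | zero =>
    cases b with
    | zero => simp; ring
    | succ b =>
      simp only [pow_zero, Nat.cast_zero, Nat.cast_succ, Nat.succ_sub_one, pow_succ]
      field_simp
      ring
  | succ a =>
    cases b with
    | zero =>
      simp only [Nat.succ_sub_one, Nat.cast_succ, Nat.cast_zero, pow_zero, pow_succ]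
      field_simp
      ring
    | succ b =>
      simp only [Nat.succ_sub_one, Nat.cast_succ, pow_succ]
      field_simp
      ring

lemma main_lemma : ∀ (n : ℕ) (a b : ℕ),
    iteratedDeriv n (Ffun a b) 0
      = ∑ k ∈ Finset.range (n + 1), (stirling2 n k : ℝ) * Dc k a b := by
  intro n
  induction n with
  | zero =>
    intro a b
    rw [iteratedDeriv_zero]
    rw [Finset.sum_range_one]
    show Ffun a b 0 = (stirling2 0 0 : ℝ) * Dc 0 a b
    unfold Ffun Dc
    rw [iteratedDeriv_zero, Real.exp_zero]
    norm_num [stirling2]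
  | succ n ih =>
    intro a b
    have hcong : deriv (Ffun a b) =ᶠ[𝓝 (0:ℝ)]
        (fun t => (a : ℝ) * Ffun (a - 1) b t + ((a : ℝ) - 1 - (b : ℝ)) * Ffun a b t
          - Ffun (a + 1) b t + 2 * b * Ffun a (b + 1) t) :=
      eventually_of_mem (sTwo_open.mem_nhds zero_mem_sTwo) (F_deriv a b)
    rw [iteratedDeriv_succ', hcong.iteratedDeriv_eq n]
    have s1 : ContDiffOn ℝ ∞ (fun t => (a : ℝ) * Ffun (a - 1) b t) {t : ℝ | Real.exp t < 2} :=
      contDiffOn_const.mul (F_smooth _ _)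
    have s2 : ContDiffOn ℝ ∞ (fun t => ((a : ℝ) - 1 - (b : ℝ)) * Ffun a b t)
        {t : ℝ | Real.exp t < 2} := contDiffOn_const.mul (F_smooth _ _)
    have s12 := s1.add s2
    have s3 : ContDiffOn ℝ ∞ (fun t => Ffun (a + 1) b t) {t : ℝ | Real.exp t < 2} :=
      F_smooth _ _
    have s123 := s12.sub s3
    have s4 : ContDiffOn ℝ ∞ (fun t => 2 * (b : ℝ) * Ffun a (b + 1) t)
        {t : ℝ | Real.exp t < 2} := contDiffOn_const.mul (F_smooth _ _)
    rw [iD_add sTwo_open zero_mem_sTwo s123 s4, iD_sub sTwo_open zero_mem_sTwo s12 s3,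
      iD_add sTwo_open zero_mem_sTwo s1 s2,
      iD_cmul sTwo_open zero_mem_sTwo _ (F_smooth _ _),
      iD_cmul sTwo_open zero_mem_sTwo _ (F_smooth _ _),
      iD_cmul sTwo_open zero_mem_sTwo _ (F_smooth _ _),
      ih (a - 1) b, ih a b, ih (a + 1) b, ih a (b + 1)]
    -- now pure algebra with sums
    have key : ∀ k, (a : ℝ) * Dc k (a - 1) b + ((a : ℝ) - 1 - b) * Dc k a b - Dc k (a + 1) b
        + 2 * b * Dc k a (b + 1) = Dc (k + 1) a b + k * Dc k a b := fun k => (Dc_rec k a b).symm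
    rw [Finset.mul_sum, Finset.mul_sum, Finset.mul_sum]
    rw [← Finset.sum_add_distrib, ← Finset.sum_sub_distrib, ← Finset.sum_add_distrib]
    have hlhs : ∑ k ∈ Finset.range (n + 1),
        ((a : ℝ) * ((stirling2 n k : ℝ) * Dc k (a - 1) b)
          + ((a : ℝ) - 1 - b) * ((stirling2 n k : ℝ) * Dc k a b)
          - (stirling2 n k : ℝ) * Dc k (a + 1) b
          + 2 * b * ((stirling2 n k : ℝ) * Dc k a (b + 1)))
        = ∑ k ∈ Finset.range (n + 1),
          (stirling2 n k : ℝ) * (Dc (k + 1) a b + k * Dc k a b) := by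
      refine Finset.sum_congr rfl fun k _ => ?_
      rw [← key k]
      ring
    rw [hlhs]
    -- RHS manipulation
    rw [Finset.sum_range_succ' (fun k => (stirling2 (n+1) k : ℝ) * Dc k a b) (n + 1)]
    have h0 : (stirling2 (n + 1) 0 : ℝ) * Dc 0 a b = 0 := by
      show ((0 : ℕ) : ℝ) * Dc 0 a b = 0
      simp
    rw [h0, add_zero]
    have hrec : ∀ k, (stirling2 (n + 1) (k + 1) : ℝ)
        = (k + 1) * (stirling2 n (k + 1) : ℝ) + (stirling2 n k : ℝ) := by
      intro k
      show ((((k + 1) * stirling2 n (k + 1) + stirling2 n k : ℕ)) : ℝ) = _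
      push_cast
      ring
    have expand : ∑ k ∈ Finset.range (n + 1), (stirling2 (n + 1) (k + 1) : ℝ) * Dc (k + 1) a b
        = ∑ k ∈ Finset.range (n + 1),
          (((k : ℝ) + 1) * (stirling2 n (k + 1) : ℝ) * Dc (k + 1) a b
            + (stirling2 n k : ℝ) * Dc (k + 1) a b) := by
      refine Finset.sum_congr rfl fun k _ => ?_
      rw [hrec k]
      ring
    rw [expand, Finset.sum_add_distrib]
    have hswap : ∑ k ∈ Finset.range (n + 1), ((k : ℝ) + 1) * (stirling2 n (k + 1) : ℝ)
          * Dc (k + 1) a b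
        = ∑ k ∈ Finset.range (n + 1), (stirling2 n k : ℝ) * ((k : ℝ) * Dc k a b) := by
      rw [Finset.sum_range_succ, Finset.sum_range_succ'
        (fun k => (stirling2 n k : ℝ) * ((k : ℝ) * Dc k a b)) n]
      rw [stirling2_eq_zero (by omega : n < n + 1)]
      simp only [Nat.cast_zero, zero_mul, mul_zero, add_zero]
      refine Finset.sum_congr rfl fun k _ => ?_
      push_cast
      ring
    rw [hswap, ← Finset.sum_add_distrib]
    refine Finset.sum_congr rfl fun k _ => ?_
    ring



/-- The function `t ↦ (e^t-1)^r e^{-(e^t-1)} / (r! (2-e^t))` is the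
exponential generating function of the `r`-partial deranged Bell numbers: its `n`-th
iterated derivative at `t = 0` equals `w̃_{n,r}`. -/
theorem iteratedDeriv_pdb_egf (r n : ℕ) :
    iteratedDeriv n (fun t : ℝ =>
      (Real.exp t - 1) ^ r * Real.exp (-(Real.exp t - 1)) /
        ((r.factorial : ℝ) * (2 - Real.exp t))) 0 = pdb n r := by
  have hfun : (fun t : ℝ =>
      (Real.exp t - 1) ^ r * Real.exp (-(Real.exp t - 1)) /
        ((r.factorial : ℝ) * (2 - Real.exp t)))
      = fun t => ((r.factorial : ℝ))⁻¹ * Ffun r 1 t := by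
    funext t
    unfold Ffun phiF
    rw [pow_one]
    have h2 : (1 : ℝ) - (Real.exp t - 1) = 2 - Real.exp t := by ring
    rw [h2, div_eq_mul_inv, mul_inv]
    ring
  rw [hfun, iD_cmul sTwo_open zero_mem_sTwo _ (F_smooth r 1), main_lemma n r 1]
  unfold pdb
  rw [Finset.mul_sum]
  refine Finset.sum_congr rfl fun k _ => ?_
  rw [Dc_eq_pderang r k]
  have h : (r.factorial : ℝ) ≠ 0 := by exact_mod_cast Nat.factorial_ne_zero r
  field_simp
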